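/- For every β > 0 there exists δ ∈ (0, e^{−3}) such that for every t > 0 there is a constant C = C(β,t) < ∞ with: for all 0 < τ ≤ t, ∫_{|z| ≤ δ/√(2β)} P_τ(z) / (|z|²·K₀(√(2β)|z|)³) dz ≤ C·( 𝟙{τ ≤ δ} / (τ·(log τ)²) + 1 ). -/

import Mathlib

open MeasureTheory Set

/-- The Macdonald function `K_ν(x) = (x^ν / 2^(ν+1)) ∫₀^∞ e^{-s - x²/(4s)} s^{-ν-1} ds`. -/
noncomputable def besselK (ν x : ℝ) : ℝ :=
  (x ^ ν / 2 ^ (ν + 1)) *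
    ∫ s in Set.Ioi (0 : ℝ), Real.exp (-s - x ^ 2 / (4 * s)) * s ^ (-ν - 1)

/-- The two-dimensional heat kernel `P_t(z) = (2πt)⁻¹ e^{-|z|²/(2t)}`. -/
noncomputable def heatKernel (t : ℝ) (z : EuclideanSpace ℝ (Fin 2)) : ℝ :=
  (2 * Real.pi * t)⁻¹ * Real.exp (-‖z‖ ^ 2 / (2 * t))

section Aux

local notation "E2" => EuclideanSpace ℝ (Fin 2)

lemma radial_lintegral (f : ℝ → ENNReal) (hf : Measurable f) :
    ∫⁻ z : E2, f ‖z‖ = (volume : Measure E2).toSphere univ *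
      ∫⁻ r in Ioi (0:ℝ), ENNReal.ofReal r * f r := by
  have hdim : Module.finrank ℝ E2 = 2 := finrank_euclideanSpace_fin
  calc
    ∫⁻ z : E2, f ‖z‖
        = ∫⁻ x : ({(0)}ᶜ : Set E2), f ‖x.1‖ ∂((volume : Measure E2).comap (↑)) := by
          rw [lintegral_subtype_comap (measurableSet_singleton _).compl fun x ↦ f ‖x‖,
            MeasureTheory.restrict_compl_singleton]
    _ = ∫⁻ x : Metric.sphere (0:E2) 1 × Ioi (0:ℝ), f x.2
          ∂(volume : Measure E2).toSphere.prod (.volumeIoiPow (Module.finrank ℝ E2 - 1)) :=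
      by simpa [homeomorphUnitSphereProd] using
        ((volume : Measure E2).measurePreserving_homeomorphUnitSphereProd.lintegral_comp
        (f := fun x : Metric.sphere (0:E2) 1 × Ioi (0:ℝ) => f x.2)
        (hf.comp (measurable_subtype_coe.comp measurable_snd)))
    _ = (volume : Measure E2).toSphere univ *
          ∫⁻ y : Ioi (0:ℝ), f y ∂(Measure.volumeIoiPow (Module.finrank ℝ E2 - 1)) := by
      rw [MeasureTheory.lintegral_prod _
        ((show Measurable fun x : Metric.sphere (0:E2) 1 × Ioi (0:ℝ) => f ↑x.2 from
          hf.comp (measurable_subtype_coe.comp measurable_snd)).aemeasurable)]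
      simp only []
      rw [lintegral_const, mul_comm]
    _ = (volume : Measure E2).toSphere univ * ∫⁻ r in Ioi (0:ℝ), ENNReal.ofReal r * f r := by
      congr 1
      rw [Measure.volumeIoiPow, lintegral_withDensity_eq_lintegral_mul _
        (by fun_prop) (show Measurable fun y : Ioi (0:ℝ) => f ↑y from hf.comp measurable_subtype_coe)]
      rw [show ((fun (r : Ioi (0:ℝ)) => ENNReal.ofReal (r.1 ^ (Module.finrank ℝ E2 - 1))) *
          fun y : Ioi (0:ℝ) => f ↑y) = fun y : Ioi (0:ℝ) =>
            (fun r : ℝ => ENNReal.ofReal r * f r) ↑y by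
        funext y
        simp [hdim, pow_one]]
      rw [lintegral_subtype_comap measurableSet_Ioi (fun r : ℝ => ENNReal.ofReal r * f r)]

lemma inner_bound {c q : ℝ} (hc : 0 < c) (hq : 0 < q) (hcq : c * q < 1) :
    ∫⁻ r in Ioc (0:ℝ) q, ENNReal.ofReal ((r * Real.log ((c*r)⁻¹) ^ 3)⁻¹)
      ≤ ENNReal.ofReal ((2 * Real.log ((c*q)⁻¹) ^ 2)⁻¹) := by
  set h : ℝ → ℝ := fun r => (r * Real.log ((c*r)⁻¹) ^ 3)⁻¹ with hh
  set H : ℝ → ℝ := fun r => (2 * Real.log ((c*r)⁻¹) ^ 2)⁻¹ with hH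
  have hlog : ∀ r : ℝ, 0 < r → r ≤ q → 0 < Real.log ((c*r)⁻¹) := by
    intro r hr hrq
    rw [Real.log_inv]
    have h1 : c * r < 1 := lt_of_le_of_lt (by nlinarith) hcq
    have h2 : Real.log (c*r) < 0 := Real.log_neg (by positivity) h1
    linarith
  have hderiv : ∀ r : ℝ, 0 < r → r ≤ q → HasDerivAt H (h r) r := by
    intro r hr hrq
    have hcr : c * r ≠ 0 := by positivity
    have hL : HasDerivAt (fun x : ℝ => Real.log ((c*x)⁻¹)) (-r⁻¹) r := by
      have h1 : HasDerivAt (fun x : ℝ => c * x) c r := by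
        simpa using (hasDerivAt_id r).const_mul c
      have h2 : HasDerivAt (fun x : ℝ => Real.log (c*x)) ((c*r)⁻¹ * c) r :=
        (Real.hasDerivAt_log hcr).comp r h1
      have : (fun x : ℝ => Real.log ((c*x)⁻¹)) = fun x => -Real.log (c*x) := by
        funext x; rw [Real.log_inv]
      rw [this]
      refine h2.neg.congr_deriv ?_
      field_simp
    have hLr := hlog r hr hrq
    have h3 : HasDerivAt (fun x : ℝ => 2 * Real.log ((c*x)⁻¹) ^ 2)
        (2 * (2 * Real.log ((c*r)⁻¹) ^ 1 * (-r⁻¹))) r := ((hL.pow 2).const_mul 2)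
    have h4 := h3.inv (by positivity)
    refine h4.congr_deriv (Eq.symm ?_)
    rw [hh]
    simp only []
    set L := Real.log ((c*r)⁻¹) with hLdef
    rw [eq_div_iff (by positivity)]
    field_simp
  have hcont : ∀ a : ℝ, 0 < a → ContinuousOn h (Icc a q) := by
    intro a ha
    apply ContinuousOn.inv₀
    · apply ContinuousOn.mul continuousOn_id
      apply ContinuousOn.pow
      apply ContinuousOn.log
      · exact (ContinuousOn.inv₀ (continuousOn_const.mul continuousOn_id)
          (fun x hx => by have hx0 : 0 < x := lt_of_lt_of_le ha hx.1; positivity))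
      · intro x hx
        have hx0 : 0 < x := lt_of_lt_of_le ha hx.1
        positivity
    · intro x hx
      have hx0 : 0 < x := lt_of_lt_of_le ha hx.1
      have := hlog x hx0 hx.2
      positivity
  have key : ∀ ε : ℝ, 0 < ε → ε ≤ q →
      ∫⁻ r in Ioc ε q, ENNReal.ofReal (h r) ≤ ENNReal.ofReal (H q) := by
    intro ε hε hεq
    have hint : IntervalIntegrable h volume ε q := by
      apply ContinuousOn.intervalIntegrable
      rw [uIcc_of_le hεq]
      exact hcont ε hε
    have hftc : ∫ r in ε..q, h r = H q - H ε := by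
      apply intervalIntegral.integral_eq_sub_of_hasDerivAt
      · intro x hx
        rw [uIcc_of_le hεq] at hx
        exact hderiv x (lt_of_lt_of_le hε hx.1) hx.2
      · exact hint
    have hIoc : ∫ r in Ioc ε q, h r = H q - H ε := by
      rw [← intervalIntegral.integral_of_le hεq, hftc]
    have hnn : 0 ≤ᵐ[volume.restrict (Ioc ε q)] h := by
      filter_upwards [ae_restrict_mem measurableSet_Ioc] with x hx
      have := hlog x (lt_of_lt_of_le hε hx.1.le) hx.2
      have hx0 : 0 < x := lt_of_lt_of_le hε hx.1.le
      positivity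
    rw [← ofReal_integral_eq_lintegral_ofReal
      ((intervalIntegrable_iff_integrableOn_Ioc_of_le hεq).mp hint) hnn, hIoc]
    apply ENNReal.ofReal_le_ofReal
    have : 0 ≤ H ε := by rw [hH]; positivity
    linarith
  have hsets : ∀ n : ℕ, Ioc (q / (n+1)) q ⊆ Ioc 0 q := by
    intro n x hx
    exact ⟨lt_trans (by positivity) hx.1, hx.2⟩
  have hmeas : Measurable fun r => ENNReal.ofReal (h r) := by
    apply ENNReal.measurable_ofReal.comp
    apply Measurable.inv
    apply Measurable.mul measurable_id
    apply Measurable.pow _ measurable_const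
    exact (Real.measurable_log.comp ((measurable_const.mul measurable_id).inv))
  have hunion : Ioc (0:ℝ) q = ⋃ n : ℕ, Ioc (q / (n+1)) q := by
    ext x
    simp only [mem_iUnion, mem_Ioc]
    constructor
    · rintro ⟨hx1, hx2⟩
      obtain ⟨n, hn⟩ := exists_nat_gt (q / x)
      refine ⟨n, ?_, hx2⟩
      rw [div_lt_iff₀ (by positivity)]
      have h5 : q < n * x := (div_lt_iff₀ hx1).mp hn
      nlinarith
    · rintro ⟨n, hn1, hn2⟩
      exact ⟨lt_trans (by positivity) hn1, hn2⟩
  calc ∫⁻ r in Ioc (0:ℝ) q, ENNReal.ofReal (h r)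
      = ∫⁻ r, (Ioc (0:ℝ) q).indicator (fun r => ENNReal.ofReal (h r)) r :=
        (lintegral_indicator measurableSet_Ioc _).symm
    _ = ∫⁻ r, ⨆ n : ℕ, (Ioc (q/(n+1)) q).indicator (fun r => ENNReal.ofReal (h r)) r := by
        apply lintegral_congr
        intro r
        by_cases hr : r ∈ Ioc (0:ℝ) q
        · rw [Set.indicator_of_mem hr]
          apply le_antisymm
          · have : r ∈ ⋃ n : ℕ, Ioc (q / (n+1)) q := hunion ▸ hr
            obtain ⟨n, hn⟩ := mem_iUnion.mp this
            calc ENNReal.ofReal (h r)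
                = (Ioc (q/(n+1)) q).indicator (fun r => ENNReal.ofReal (h r)) r :=
                  (Set.indicator_of_mem hn (fun r => ENNReal.ofReal (h r))).symm
              _ ≤ _ := le_iSup (fun n : ℕ => (Ioc (q/(n+1)) q).indicator
                  (fun r => ENNReal.ofReal (h r)) r) n
          · exact iSup_le fun n => Set.indicator_le_self _ _ r
        · rw [Set.indicator_of_notMem hr]
          symm
          simp only [ENNReal.iSup_eq_zero]
          intro n
          exact Set.indicator_of_notMem (fun hmem => hr (hsets n hmem)) _
    _ = ⨆ n : ℕ, ∫⁻ r, (Ioc (q/(n+1)) q).indicator (fun r => ENNReal.ofReal (h r)) r := by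
        apply lintegral_iSup
        · intro n
          exact hmeas.indicator measurableSet_Ioc
        · intro m n hmn
          intro r
          apply Set.indicator_le_indicator_of_subset
          · apply Ioc_subset_Ioc_left
            apply div_le_div_of_nonneg_left hq.le (by positivity)
            exact_mod_cast by exact_mod_cast add_le_add_left (Nat.cast_le.mpr hmn) 1
          · exact fun a => zero_le
    _ ≤ ENNReal.ofReal (H q) := by
        apply iSup_le
        intro n
        rw [lintegral_indicator measurableSet_Ioc]
        apply key
        · positivity
        · rw [div_le_iff₀ (by positivity)]
          nlinarith

lemma besselK_zero_eq (x : ℝ) :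
    besselK 0 x = (∫ s in Set.Ioi (0 : ℝ), Real.exp (-s - x ^ 2 / (4 * s)) * s⁻¹) / 2 := by
  unfold besselK
  have h1 : ∀ s : ℝ, s ^ (-(0:ℝ) - 1) = s⁻¹ := by
    intro s
    rw [show (-(0:ℝ) - 1) = ((-1 : ℤ) : ℝ) by norm_num, Real.rpow_intCast, zpow_neg_one]
  simp only [h1]
  rw [Real.rpow_zero, show ((0:ℝ) + 1) = ((1 : ℕ) : ℝ) by norm_num, Real.rpow_natCast]
  ring

lemma besselK_zero_nonneg (x : ℝ) : 0 ≤ besselK 0 x := by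
  rw [besselK_zero_eq]
  apply div_nonneg _ (by norm_num)
  apply setIntegral_nonneg measurableSet_Ioi
  intro s hs
  have hs0 : 0 < s := hs
  positivity

lemma besselK_zero_measurable : Measurable fun x : ℝ => besselK 0 x := by
  simp only [besselK_zero_eq]
  apply Measurable.div _ measurable_const
  have : StronglyMeasurable fun p : ℝ × ℝ => Real.exp (-p.2 - p.1 ^ 2 / (4 * p.2)) * p.2⁻¹ := by
    apply Measurable.stronglyMeasurable
    exact ((measurable_snd.neg.sub
      ((measurable_fst.pow_const 2).div (measurable_const.mul measurable_snd))).exp).mul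
      measurable_snd.inv
  exact (this.integral_prod_right').measurable

lemma besselK_zero_lower {x : ℝ} (h0 : 0 < x) (h1 : x ≤ 1) :
    Real.log x⁻¹ / 8 ≤ besselK 0 x := by
  rw [besselK_zero_eq]
  set f : ℝ → ℝ := fun s => Real.exp (-s - x ^ 2 / (4 * s)) * s⁻¹ with hf
  have hint : IntegrableOn f (Ioi (0:ℝ)) := by
    apply Integrable.mono' (g := fun s => (4 / x ^ 2) * Real.exp (-1 * s))
    · exact (exp_neg_integrableOn_Ioi 0 one_pos).const_mul _
    · apply (ContinuousOn.aestronglyMeasurable _ measurableSet_Ioi)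
      intro s hs
      have hs0 : 0 < s := hs
      apply ContinuousWithinAt.mul
      · apply Real.continuous_exp.continuousAt.comp_continuousWithinAt
        apply ContinuousWithinAt.sub (continuousWithinAt_id.neg)
        exact (continuousWithinAt_const.pow 2).div
          (continuousWithinAt_const.mul continuousWithinAt_id) (by positivity)
      · exact continuousWithinAt_id.inv₀ hs0.ne'
    · filter_upwards [ae_restrict_mem measurableSet_Ioi] with s hs
      have hs0 : 0 < s := hs
      rw [Real.norm_eq_abs, abs_of_nonneg (by positivity)]
      have key : Real.exp (-(x ^ 2 / (4 * s))) ≤ 4 * s / x ^ 2 := by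
        have h2 : (0:ℝ) < x ^ 2 / (4 * s) := by positivity
        have h3 : x ^ 2 / (4 * s) ≤ Real.exp (x ^ 2 / (4 * s)) := by
          linarith [Real.add_one_le_exp (x ^ 2 / (4 * s))]
        rw [Real.exp_neg]
        calc (Real.exp (x ^ 2 / (4 * s)))⁻¹ ≤ (x ^ 2 / (4 * s))⁻¹ := by
              apply inv_anti₀ h2 h3
          _ = 4 * s / x ^ 2 := by field_simp
      calc f s = Real.exp (-s) * (Real.exp (-(x ^ 2 / (4 * s))) * s⁻¹) := by
            rw [hf]
            simp only []
            rw [show (-s - x ^ 2 / (4 * s)) = (-s) + -(x ^ 2 / (4 * s)) by ring, Real.exp_add]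
            ring
        _ ≤ Real.exp (-s) * ((4 * s / x ^ 2) * s⁻¹) := by
            apply mul_le_mul_of_nonneg_left _ (Real.exp_nonneg _)
            apply mul_le_mul_of_nonneg_right key (by positivity)
        _ = 4 / x ^ 2 * Real.exp (-1 * s) := by
            rw [neg_one_mul]; field_simp
  have hmono : ∫ s in Ioc x 1, f s ≤ ∫ s in Ioi (0:ℝ), f s := by
    apply setIntegral_mono_set hint
    · filter_upwards [ae_restrict_mem measurableSet_Ioi] with s hs
      have hs0 : 0 < s := hs
      rw [hf]
      simp only []
      positivity
    · filter_upwards with s hs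
      exact lt_of_lt_of_le h0 hs.1.le
  have hcont : ContinuousOn (fun s : ℝ => Real.exp (-(5/4 : ℝ)) * s⁻¹) (Icc x 1) :=
    continuousOn_const.mul (ContinuousOn.inv₀ continuousOn_id
      (fun s hs => by have hs0 : 0 < s := lt_of_lt_of_le h0 hs.1; positivity))
  have hlow : Real.exp (-(5/4 : ℝ)) * Real.log x⁻¹ ≤ ∫ s in Ioc x 1, f s := by
    have h2 : ∫ s in Ioc x 1, Real.exp (-(5/4 : ℝ)) * s⁻¹ ≤ ∫ s in Ioc x 1, f s := by
      apply setIntegral_mono_on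
      · exact (hcont.integrableOn_Icc).mono_set Ioc_subset_Icc_self
      · exact hint.mono_set (fun s hs => lt_of_lt_of_le h0 hs.1.le)
      · exact measurableSet_Ioc
      · intro s hs
        have hsx : x < s := hs.1
        have hs1 : s ≤ 1 := hs.2
        have hs0 : 0 < s := lt_trans h0 hsx
        rw [hf]
        simp only []
        apply mul_le_mul_of_nonneg_right _ (by positivity)
        apply Real.exp_le_exp.mpr
        have : x ^ 2 / (4 * s) ≤ x / 4 := by
          rw [div_le_div_iff₀ (by positivity) (by norm_num)]
          nlinarith
        linarith
    have h3 : ∫ s in Ioc x 1, Real.exp (-(5/4 : ℝ)) * s⁻¹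
        = Real.exp (-(5/4 : ℝ)) * Real.log x⁻¹ := by
      rw [MeasureTheory.integral_const_mul]
      congr 1
      rw [← intervalIntegral.integral_of_le h1, integral_inv
        (by rw [uIcc_of_le h1]; intro hmem; exact absurd hmem.1 (by linarith))]
      rw [one_div]
    linarith
  have hexp : (1/4 : ℝ) ≤ Real.exp (-(5/4 : ℝ)) := by
    have h4 : Real.exp (5/4 : ℝ) ≤ 4 := by
      have hl : (5/4 : ℝ) ≤ Real.log 4 := by
        rw [show (4:ℝ) = 2 ^ 2 by norm_num, Real.log_pow]
        have := Real.log_two_gt_d9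
        push_cast
        linarith
      calc Real.exp (5/4 : ℝ) ≤ Real.exp (Real.log 4) := Real.exp_le_exp.mpr hl
        _ = 4 := Real.exp_log (by norm_num)
    rw [Real.exp_neg]
    rw [show (1/4 : ℝ) = 4⁻¹ by norm_num]
    exact inv_anti₀ (Real.exp_pos _) h4
  have hlog : 0 ≤ Real.log x⁻¹ := by
    rw [Real.log_inv]
    simp only [Left.nonneg_neg_iff]
    exact Real.log_nonpos h0.le h1
  have h6 : Real.exp (-(5/4:ℝ)) * Real.log x⁻¹ ≤ ∫ s in Ioi (0:ℝ), f s := le_trans hlow hmono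
  have h5 : (1/4 : ℝ) * Real.log x⁻¹ ≤ ∫ s in Ioi (0:ℝ), f s := by
    nlinarith
  linarith

lemma outer_piece {c q R τ : ℝ} (hq : 0 < q) (hqR : q ≤ R) (hτ : 0 < τ)
    (h4 : ∀ r : ℝ, q < r → r ≤ R → 4 ≤ Real.log ((c*r)⁻¹)) :
    ∫⁻ r in Ioc q R, ENNReal.ofReal (512 * (2*Real.pi*τ)⁻¹ * Real.exp (-r^2/(2*τ)) *
        (r * Real.log ((c*r)⁻¹) ^ 3)⁻¹)
      ≤ ENNReal.ofReal (512 * (2*Real.pi*τ)⁻¹ * Real.exp (-q^2/(2*τ)) * (1/64) *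
          Real.log (R/q)) := by
  have hπ := Real.pi_pos
  set A : ℝ := 512 * (2*Real.pi*τ)⁻¹ with hA
  have hA0 : 0 < A := by rw [hA]; positivity
  set B : ℝ := A * Real.exp (-q^2/(2*τ)) * (1/64) with hB
  have hB0 : 0 < B := by rw [hB]; positivity
  calc ∫⁻ r in Ioc q R, ENNReal.ofReal (A * Real.exp (-r^2/(2*τ)) *
        (r * Real.log ((c*r)⁻¹) ^ 3)⁻¹)
      ≤ ∫⁻ r in Ioc q R, ENNReal.ofReal (B * r⁻¹) := by
        apply lintegral_mono_ae
        filter_upwards [ae_restrict_mem measurableSet_Ioc] with r hr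
        apply ENNReal.ofReal_le_ofReal
        have hr0 : 0 < r := lt_trans hq hr.1
        have hL : 4 ≤ Real.log ((c*r)⁻¹) := h4 r hr.1 hr.2
        have hL3 : 64 ≤ Real.log ((c*r)⁻¹) ^ 3 := by
          calc (64:ℝ) = 4^3 := by norm_num
            _ ≤ Real.log ((c*r)⁻¹) ^ 3 := pow_le_pow_left₀ (by norm_num) hL 3
        have he : Real.exp (-r^2/(2*τ)) ≤ Real.exp (-q^2/(2*τ)) := by
          apply Real.exp_le_exp.mpr
          have h2 : q^2 ≤ r^2 := by nlinarith [hr.1.le]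
          have h3 : (0:ℝ) < 2*τ := by positivity
          exact (div_le_div_iff_of_pos_right h3).mpr (by linarith)
        have hinv : (r * Real.log ((c*r)⁻¹) ^ 3)⁻¹ ≤ (1/64) * r⁻¹ := by
          rw [mul_inv]
          rw [mul_comm]
          apply mul_le_mul_of_nonneg_right _ (by positivity)
          rw [show (1/64 : ℝ) = 64⁻¹ by norm_num]
          exact inv_anti₀ (by norm_num) hL3
        calc A * Real.exp (-r^2/(2*τ)) * (r * Real.log ((c*r)⁻¹) ^ 3)⁻¹
            ≤ A * Real.exp (-q^2/(2*τ)) * (r * Real.log ((c*r)⁻¹) ^ 3)⁻¹ := by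
              apply mul_le_mul_of_nonneg_right _ (by positivity)
              exact mul_le_mul_of_nonneg_left he hA0.le
          _ ≤ A * Real.exp (-q^2/(2*τ)) * ((1/64) * r⁻¹) := by
              apply mul_le_mul_of_nonneg_left hinv (by positivity)
          _ = B * r⁻¹ := by rw [hB]; ring
    _ = ENNReal.ofReal B * ∫⁻ r in Ioc q R, ENNReal.ofReal r⁻¹ := by
        rw [← lintegral_const_mul' _ _ ENNReal.ofReal_ne_top]
        apply lintegral_congr_ae
        filter_upwards [ae_restrict_mem measurableSet_Ioc] with r hr
        rw [← ENNReal.ofReal_mul hB0.le]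
    _ ≤ ENNReal.ofReal B * ENNReal.ofReal (Real.log (R/q)) := by
        apply mul_le_mul_right
        have hint : IntegrableOn (fun r : ℝ => r⁻¹) (Ioc q R) := by
          apply (ContinuousOn.integrableOn_Icc _).mono_set Ioc_subset_Icc_self
          exact ContinuousOn.inv₀ continuousOn_id
            (fun s hs => by have : 0 < s := lt_of_lt_of_le hq hs.1; positivity)
        have hnn : 0 ≤ᵐ[volume.restrict (Ioc q R)] fun r : ℝ => r⁻¹ := by
          filter_upwards [ae_restrict_mem measurableSet_Ioc] with r hr
          have : 0 < r := lt_trans hq hr.1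
          positivity
        rw [← ofReal_integral_eq_lintegral_ofReal hint hnn]
        apply ENNReal.ofReal_le_ofReal
        rw [← intervalIntegral.integral_of_le hqR, integral_inv (by
          rw [uIcc_of_le hqR]
          intro hmem
          exact absurd hmem.1 (by push_neg; exact hq))]
    _ = ENNReal.ofReal (A * Real.exp (-q^2/(2*τ)) * (1/64) * Real.log (R/q)) := by
        rw [← ENNReal.ofReal_mul hB0.le, hB]

lemma inner_piece {c p τ : ℝ} (hc : 0 < c) (hp : 0 < p) (hcp : c * p < 1) (hτ : 0 < τ) :
    ∫⁻ r in Ioc (0:ℝ) p, ENNReal.ofReal (512 * (2*Real.pi*τ)⁻¹ * Real.exp (-r^2/(2*τ)) *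
        (r * Real.log ((c*r)⁻¹) ^ 3)⁻¹)
      ≤ ENNReal.ofReal (512 * (2*Real.pi*τ)⁻¹ * (2 * Real.log ((c*p)⁻¹) ^ 2)⁻¹) := by
  have hπ := Real.pi_pos
  set A : ℝ := 512 * (2*Real.pi*τ)⁻¹ with hA
  have hA0 : 0 < A := by rw [hA]; positivity
  calc ∫⁻ r in Ioc (0:ℝ) p, ENNReal.ofReal (A * Real.exp (-r^2/(2*τ)) *
        (r * Real.log ((c*r)⁻¹) ^ 3)⁻¹)
      ≤ ∫⁻ r in Ioc (0:ℝ) p, ENNReal.ofReal A * ENNReal.ofReal ((r * Real.log ((c*r)⁻¹) ^ 3)⁻¹) := by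
        apply lintegral_mono_ae
        filter_upwards [ae_restrict_mem measurableSet_Ioc] with r hr
        rw [← ENNReal.ofReal_mul hA0.le]
        apply ENNReal.ofReal_le_ofReal
        have hr0 : 0 < r := hr.1
        have hL : 0 < Real.log ((c*r)⁻¹) := by
          rw [Real.log_inv]
          have h1 : c * r ≤ c * p := mul_le_mul_of_nonneg_left hr.2 hc.le
          have h2 : Real.log (c*r) < 0 := Real.log_neg (by positivity) (lt_of_le_of_lt h1 hcp)
          linarith
        have he : Real.exp (-r^2/(2*τ)) ≤ 1 := Real.exp_le_one_iff.mpr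
          (div_nonpos_of_nonpos_of_nonneg (neg_nonpos.mpr (by positivity)) (by positivity))
        calc A * Real.exp (-r^2/(2*τ)) * (r * Real.log ((c*r)⁻¹) ^ 3)⁻¹
            ≤ A * 1 * (r * Real.log ((c*r)⁻¹) ^ 3)⁻¹ := by
              apply mul_le_mul_of_nonneg_right _ (by positivity)
              exact mul_le_mul_of_nonneg_left he hA0.le
          _ = A * (r * Real.log ((c*r)⁻¹) ^ 3)⁻¹ := by ring
    _ = ENNReal.ofReal A * ∫⁻ r in Ioc (0:ℝ) p, ENNReal.ofReal ((r * Real.log ((c*r)⁻¹) ^ 3)⁻¹) :=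
        lintegral_const_mul' _ _ ENNReal.ofReal_ne_top
    _ ≤ ENNReal.ofReal A * ENNReal.ofReal ((2 * Real.log ((c*p)⁻¹) ^ 2)⁻¹) :=
        mul_le_mul_right (inner_bound hc hp hcp) _
    _ = ENNReal.ofReal (A * (2 * Real.log ((c*p)⁻¹) ^ 2)⁻¹) := (ENNReal.ofReal_mul hA0.le).symm

lemma aux_mul_inv (a r L : ℝ) (hr : r ≠ 0) : r * (a * (r^2*L)⁻¹) = a * (r*L)⁻¹ := by
  rcases eq_or_ne L 0 with h|h
  · simp [h]
  · field_simp

lemma aux_div (h r L : ℝ) (hr : r ≠ 0) (hL : L ≠ 0) :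
    h / (r^2 * (L/512)) = 512 * h * (r^2*L)⁻¹ := by
  field_simp

end Aux

set_option maxHeartbeats 1000000 in
/-- For every `β > 0` there is `δ ∈ (0, e^{-3})` such that for every `t > 0` there is a
constant `C = C(β,t)` with
`∫_{|z| ≤ δ/√(2β)} P_τ(z) / (|z|² K₀(√(2β)|z|)³) dz ≤ C (𝟙{τ ≤ δ}/(τ (log τ)²) + 1)`
for all `0 < τ ≤ t`. -/
theorem stmt13 (β : ℝ) (hβ : 0 < β) :
    ∃ δ : ℝ, 0 < δ ∧ δ < Real.exp (-3) ∧
      ∀ t : ℝ, 0 < t → ∃ C : ℝ, ∀ τ : ℝ, 0 < τ → τ ≤ t →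
        ∫ z in Metric.closedBall (0 : EuclideanSpace ℝ (Fin 2)) (δ / Real.sqrt (2 * β)),
            heatKernel τ z / (‖z‖ ^ 2 * (besselK 0 (Real.sqrt (2 * β) * ‖z‖)) ^ 3)
          ≤ C * ((if τ ≤ δ then (τ * (Real.log τ) ^ 2)⁻¹ else 0) + 1) := by
  have hπ := Real.pi_pos
  refine ⟨Real.exp (-4), Real.exp_pos _, Real.exp_lt_exp.mpr (by norm_num), ?_⟩
  intro t ht
  set c : ℝ := Real.sqrt (2*β) with hcdef
  have hc : 0 < c := Real.sqrt_pos.mpr (by linarith)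
  set d : ℝ := Real.exp (-4:ℝ) with hd
  have hd0 : 0 < d := Real.exp_pos _
  have hd1 : d < 1 := by rw [hd]; exact Real.exp_lt_one_iff.mpr (by norm_num)
  have hlogd : Real.log d = -4 := by rw [hd]; exact Real.log_exp _
  set R : ℝ := d / c with hRdef
  have hR0 : 0 < R := by positivity
  have hcR : c * R = d := by rw [hRdef]; field_simp
  have hell4 : ∀ r : ℝ, 0 < r → r ≤ R → 4 ≤ Real.log ((c*r)⁻¹) := by
    intro r h1 h2
    have hcr0 : 0 < c * r := by positivity
    have hcrd : c * r ≤ d := by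
      calc c*r ≤ c*R := mul_le_mul_of_nonneg_left h2 hc.le
        _ = d := hcR
    rw [Real.log_inv]
    have h3 : Real.log (c*r) ≤ Real.log d := Real.log_le_log hcr0 hcrd
    rw [hlogd] at h3; linarith
  set S : ENNReal := (volume : Measure (EuclideanSpace ℝ (Fin 2))).toSphere univ with hSdef
  have hSne : S ≠ ⊤ := measure_ne_top _ _
  set C0 : ℝ := S.toReal with hC0
  have hC00 : 0 ≤ C0 := ENNReal.toReal_nonneg
  refine ⟨C0 * (2048 / Real.pi + 4096 / (Real.pi * R^8) + 16 / (Real.pi * d)), ?_⟩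
  intro τ hτ hτt
  set F : EuclideanSpace ℝ (Fin 2) → ℝ :=
    fun z => heatKernel τ z / (‖z‖ ^ 2 * (besselK 0 (c * ‖z‖)) ^ 3) with hF
  have h2πτ : (0:ℝ) < 2 * Real.pi * τ := by positivity
  have hFnn : ∀ z, 0 ≤ F z := by
    intro z
    apply div_nonneg
    · simp only [heatKernel]
      positivity
    · exact mul_nonneg (by positivity) (pow_nonneg (besselK_zero_nonneg _) 3)
  have hFm : Measurable F := by
    rw [hF]
    apply Measurable.div
    · unfold heatKernel
      exact measurable_const.mul (((measurable_norm.pow_const 2).neg.div_const (2*τ)).exp)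
    · exact (measurable_norm.pow_const 2).mul
        ((besselK_zero_measurable.comp (measurable_const.mul measurable_norm)).pow_const 3)
  -- the dominating radial function
  set G : ℝ → ENNReal := fun r => (Ioc (0:ℝ) R).indicator
    (fun r => ENNReal.ofReal (512 * (2*Real.pi*τ)⁻¹ * Real.exp (-r^2/(2*τ)) *
      (r^2 * Real.log ((c*r)⁻¹) ^ 3)⁻¹)) r with hG
  have hGm : Measurable G := by
    apply Measurable.indicator _ measurableSet_Ioc
    apply ENNReal.measurable_ofReal.comp
    apply Measurable.mul
    · exact measurable_const.mul (((measurable_id.pow_const 2).neg.div_const (2*τ)).exp)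
    · exact ((measurable_id.pow_const 2).mul
        ((Real.measurable_log.comp ((measurable_const.mul measurable_id).inv)).pow_const 3)).inv
  -- main chain
  have key : ∫⁻ z in Metric.closedBall (0 : EuclideanSpace ℝ (Fin 2)) R,
      ENNReal.ofReal (F z)
      ≤ S * ∫⁻ r in Ioc (0:ℝ) R, ENNReal.ofReal (512 * (2*Real.pi*τ)⁻¹ *
          Real.exp (-r^2/(2*τ)) * (r * Real.log ((c*r)⁻¹) ^ 3)⁻¹) := by
    calc ∫⁻ z in Metric.closedBall (0 : EuclideanSpace ℝ (Fin 2)) R, ENNReal.ofReal (F z)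
        ≤ ∫⁻ z in Metric.closedBall (0 : EuclideanSpace ℝ (Fin 2)) R, G ‖z‖ := by
          apply lintegral_mono_ae
          filter_upwards [ae_restrict_mem measurableSet_closedBall] with z hz
          have hzR : ‖z‖ ≤ R := by
            rwa [Metric.mem_closedBall, dist_zero_right] at hz
          by_cases hz0 : ‖z‖ = 0
          · have : F z = 0 := by
              rw [hF]
              simp only [hz0]
              norm_num
            rw [this]
            simp only [ENNReal.ofReal_zero]
            exact zero_le
          · have hzpos : 0 < ‖z‖ := lt_of_le_of_ne (norm_nonneg z) (Ne.symm hz0)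
            have hmemz : ‖z‖ ∈ Ioc (0:ℝ) R := ⟨hzpos, hzR⟩
            simp only [hG]
            rw [Set.indicator_of_mem hmemz]
            apply ENNReal.ofReal_le_ofReal
            have hx0 : 0 < c * ‖z‖ := by positivity
            have hxd : c * ‖z‖ ≤ d := by
              calc c * ‖z‖ ≤ c * R := mul_le_mul_of_nonneg_left hzR hc.le
                _ = d := hcR
            have hx1 : c * ‖z‖ ≤ 1 := le_trans hxd hd1.le
            have hK := besselK_zero_lower hx0 hx1
            have hL4 : 4 ≤ Real.log ((c*‖z‖)⁻¹) := hell4 _ hzpos hzR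
            have hKpos : 0 < besselK 0 (c*‖z‖) := lt_of_lt_of_le (by linarith) hK
            have hheat : 0 ≤ heatKernel τ z := by simp only [heatKernel]; positivity
            have hcube : (Real.log ((c*‖z‖)⁻¹)/8)^3 ≤ besselK 0 (c*‖z‖)^3 :=
              pow_le_pow_left₀ (by linarith) hK 3
            have hden : ‖z‖^2 * (Real.log ((c*‖z‖)⁻¹)^3/512) ≤ ‖z‖^2 * besselK 0 (c*‖z‖)^3 := by
              apply mul_le_mul_of_nonneg_left _ (by positivity)
              calc Real.log ((c*‖z‖)⁻¹)^3/512 = (Real.log ((c*‖z‖)⁻¹)/8)^3 := by ring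
                _ ≤ besselK 0 (c*‖z‖)^3 := hcube
            calc F z ≤ heatKernel τ z / (‖z‖^2 * (Real.log ((c*‖z‖)⁻¹)^3/512)) := by
                  simp only [hF]
                  apply div_le_div_of_nonneg_left hheat _ hden
                  positivity
              _ = 512 * (2*Real.pi*τ)⁻¹ * Real.exp (-‖z‖^2/(2*τ)) *
                  (‖z‖^2 * Real.log ((c*‖z‖)⁻¹) ^ 3)⁻¹ := by
                  have hLne : Real.log ((c*‖z‖)⁻¹) ^ 3 ≠ 0 := by positivity
                  have h30 : heatKernel τ z = (2*Real.pi*τ)⁻¹ * Real.exp (-‖z‖^2/(2*τ)) := rfl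
                  rw [show ‖z‖^2 * (Real.log ((c*‖z‖)⁻¹)^3/512)
                      = ‖z‖^2 * ((Real.log ((c*‖z‖)⁻¹)^3)/512) by ring,
                    aux_div _ _ _ hz0 hLne, h30]
                  ring
      _ ≤ ∫⁻ z : EuclideanSpace ℝ (Fin 2), G ‖z‖ := setLIntegral_le_lintegral _ _
      _ = S * ∫⁻ r in Ioi (0:ℝ), ENNReal.ofReal r * G r := radial_lintegral G hGm
      _ = S * ∫⁻ r in Ioc (0:ℝ) R, ENNReal.ofReal (512 * (2*Real.pi*τ)⁻¹ *
            Real.exp (-r^2/(2*τ)) * (r * Real.log ((c*r)⁻¹) ^ 3)⁻¹) := by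
          congr 1
          rw [setLIntegral_congr_fun measurableSet_Ioi
            (g := fun r => (Ioc (0:ℝ) R).indicator (fun r => ENNReal.ofReal (512 * (2*Real.pi*τ)⁻¹ *
              Real.exp (-r^2/(2*τ)) * (r * Real.log ((c*r)⁻¹) ^ 3)⁻¹)) r) ?_]
          · rw [lintegral_indicator measurableSet_Ioc,
              Measure.restrict_restrict measurableSet_Ioc,
              inter_eq_left.mpr Ioc_subset_Ioi_self]
          · intro r hr
            have hr0 : (0:ℝ) < r := hr
            simp only [hG]
            by_cases hmem : r ∈ Ioc (0:ℝ) R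
            · rw [Set.indicator_of_mem hmem, Set.indicator_of_mem hmem,
                ← ENNReal.ofReal_mul hr0.le]
              congr 1
              exact aux_mul_inv _ _ _ hr0.ne'
            · rw [Set.indicator_of_notMem hmem, Set.indicator_of_notMem hmem, mul_zero]
  -- convert the Bochner integral
  have hstep1 : ∫ z in Metric.closedBall (0 : EuclideanSpace ℝ (Fin 2)) R, F z
      = (∫⁻ z in Metric.closedBall (0 : EuclideanSpace ℝ (Fin 2)) R,
          ENNReal.ofReal (F z)).toReal := by
    apply integral_eq_lintegral_of_nonneg_ae (ae_of_all _ hFnn)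
    exact hFm.aestronglyMeasurable
  rw [hstep1]
  rcases le_or_gt τ d with hcase | hcase
  · -- small τ
    rw [if_pos hcase]
    set σ : ℝ := Real.sqrt (Real.sqrt τ) with hσdef
    have hτ1 : τ < 1 := lt_of_le_of_lt hcase hd1
    have hsτ : 0 < Real.sqrt τ := Real.sqrt_pos.mpr hτ
    have hσ0 : 0 < σ := Real.sqrt_pos.mpr hsτ
    have hσ1 : σ ≤ 1 := Real.sqrt_le_one.mpr (Real.sqrt_le_one.mpr hτ1.le)
    set q : ℝ := R * σ with hqdef
    have hq0 : 0 < q := by positivity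
    have hqR : q ≤ R := by nlinarith
    have hlogτ : Real.log τ < 0 := Real.log_neg hτ hτ1
    have hlogσ : Real.log σ = Real.log τ / 4 := by
      rw [hσdef, Real.log_sqrt (Real.sqrt_nonneg τ), Real.log_sqrt hτ.le]; ring
    have hcq : c * q = d * σ := by rw [hqdef, ← mul_assoc, hcR]
    have hcq1 : c * q < 1 := by
      rw [hcq]
      calc d * σ ≤ d * 1 := mul_le_mul_of_nonneg_left hσ1 hd0.le
        _ < 1 := by rw [mul_one]; exact hd1
    have hℓq : Real.log ((c*q)⁻¹) = 4 - Real.log τ / 4 := by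
      rw [hcq, Real.log_inv, Real.log_mul hd0.ne' hσ0.ne', hlogd, hlogσ]; ring
    -- split the integral
    have hsplit : ∫⁻ r in Ioc (0:ℝ) R, ENNReal.ofReal (512 * (2*Real.pi*τ)⁻¹ *
          Real.exp (-r^2/(2*τ)) * (r * Real.log ((c*r)⁻¹) ^ 3)⁻¹)
        = (∫⁻ r in Ioc (0:ℝ) q, ENNReal.ofReal (512 * (2*Real.pi*τ)⁻¹ *
            Real.exp (-r^2/(2*τ)) * (r * Real.log ((c*r)⁻¹) ^ 3)⁻¹))
          + ∫⁻ r in Ioc q R, ENNReal.ofReal (512 * (2*Real.pi*τ)⁻¹ *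
            Real.exp (-r^2/(2*τ)) * (r * Real.log ((c*r)⁻¹) ^ 3)⁻¹) := by
      rw [← Ioc_union_Ioc_eq_Ioc hq0.le hqR,
        lintegral_union measurableSet_Ioc (Set.Ioc_disjoint_Ioc_of_le le_rfl)]
    -- inner estimate
    have hinner := inner_piece (τ := τ) hc hq0 hcq1 hτ
    have hℓq_ge : -Real.log τ/4 ≤ Real.log ((c*q)⁻¹) := by rw [hℓq]; linarith
    have hx1 : 512 * (2*Real.pi*τ)⁻¹ * (2 * Real.log ((c*q)⁻¹) ^ 2)⁻¹
        ≤ 2048 / Real.pi * (τ * Real.log τ ^ 2)⁻¹ := by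
      have h2 : Real.log τ^2/8 ≤ 2 * Real.log ((c*q)⁻¹)^2 := by
        have h2a : (0:ℝ) ≤ -Real.log τ/4 := by linarith
        have := mul_self_le_mul_self h2a hℓq_ge
        nlinarith
      have h3 : (2 * Real.log ((c*q)⁻¹)^2)⁻¹ ≤ (Real.log τ^2/8)⁻¹ := by
        apply inv_anti₀ _ h2
        have : Real.log τ ≠ 0 := hlogτ.ne
        positivity
      calc 512 * (2*Real.pi*τ)⁻¹ * (2 * Real.log ((c*q)⁻¹) ^ 2)⁻¹
          ≤ 512 * (2*Real.pi*τ)⁻¹ * (Real.log τ^2/8)⁻¹ :=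
            mul_le_mul_of_nonneg_left h3 (by positivity)
        _ = 2048 / Real.pi * (τ * Real.log τ ^ 2)⁻¹ := by
            have hLτ : Real.log τ ≠ 0 := hlogτ.ne
            field_simp
            ring
    -- outer estimate
    have houter := outer_piece (c := c) hq0 hqR hτ
      (fun r h1 h2 => hell4 r (lt_trans hq0 h1) h2)
    have hq2 : q^2 = R^2 * Real.sqrt τ := by
      rw [hqdef, mul_pow, hσdef, Real.sq_sqrt (Real.sqrt_nonneg τ)]
    have hsτ' : 0 < Real.sqrt τ := Real.sqrt_pos.mpr hτ
    have hE : -q^2/(2*τ) = -(R^2/(2*Real.sqrt τ)) := by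
      have h31 : -q^2/(2*τ) = -(R^2 * Real.sqrt τ)/(2*(Real.sqrt τ * Real.sqrt τ)) := by
        rw [hq2, Real.mul_self_sqrt hτ.le]
      rw [h31, neg_div, neg_inj, div_eq_div_iff (by positivity) (by positivity)]
      ring
    have hexpb : Real.exp (-q^2/(2*τ)) ≤ 4096 * τ^2 / R^8 := by
      rw [hE]
      set y : ℝ := R^2/(2*Real.sqrt τ) with hy
      have hy0 : 0 < y := by positivity
      have h14 : y/4 ≤ Real.exp (y/4) := by linarith [Real.add_one_le_exp (y/4)]
      have h15 : (y/4)^4 ≤ Real.exp (y/4)^4 := pow_le_pow_left₀ (by positivity) h14 4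
      have h16 : Real.exp (y/4)^4 = Real.exp y := by
        rw [← Real.exp_nat_mul]
        congr 1
        push_cast
        ring
      have h18 : Real.sqrt τ^2 = τ := Real.sq_sqrt hτ.le
      have h17 : (y/4)^4 = R^8/(4096 * τ^2) := by
        have h32 : y/4 = R^2/(8*Real.sqrt τ) := by rw [hy]; ring
        rw [h32, div_pow, show ((R^2:ℝ))^4 = R^8 by ring,
          show ((8*Real.sqrt τ:ℝ))^4 = 4096*(Real.sqrt τ^2)^2 by ring, h18]
      rw [Real.exp_neg]
      calc (Real.exp y)⁻¹ ≤ ((y/4)^4)⁻¹ := inv_anti₀ (by positivity) (h16 ▸ h15)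
        _ = 4096 * τ^2 / R^8 := by
            rw [h17]
            field_simp
    have hRq : R/q = σ⁻¹ := by rw [hqdef]; field_simp
    have hlogRq : Real.log (R/q) = -(Real.log τ/4) := by
      rw [hRq, Real.log_inv, hlogσ]
    have hlog_le : Real.log (R/q) ≤ τ⁻¹/4 := by
      rw [hlogRq]
      have h19 := Real.log_le_sub_one_of_pos (inv_pos.mpr hτ)
      rw [Real.log_inv] at h19
      have h20 : 0 < τ⁻¹ := inv_pos.mpr hτ
      linarith
    have hlog_nn : 0 ≤ Real.log (R/q) := by rw [hlogRq]; linarith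
    have hx2 : 512 * (2*Real.pi*τ)⁻¹ * Real.exp (-q^2/(2*τ)) * (1/64) * Real.log (R/q)
        ≤ 4096 / (Real.pi * R^8) := by
      calc 512 * (2*Real.pi*τ)⁻¹ * Real.exp (-q^2/(2*τ)) * (1/64) * Real.log (R/q)
          ≤ 512 * (2*Real.pi*τ)⁻¹ * (4096 * τ^2 / R^8) * (1/64) * (τ⁻¹/4) := by
            apply mul_le_mul (by
              apply mul_le_mul_of_nonneg_right _ (by norm_num)
              exact mul_le_mul_of_nonneg_left hexpb (by positivity)) hlog_le hlog_nn
              (by positivity)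
        _ = 4096 / (Real.pi * R^8) := by
            field_simp
            ring
    -- combine
    have hcomb : (∫⁻ z in Metric.closedBall (0 : EuclideanSpace ℝ (Fin 2)) R,
        ENNReal.ofReal (F z))
        ≤ S * ENNReal.ofReal (2048 / Real.pi * (τ * Real.log τ ^ 2)⁻¹ + 4096 / (Real.pi * R^8)) := by
      calc (∫⁻ z in Metric.closedBall (0 : EuclideanSpace ℝ (Fin 2)) R, ENNReal.ofReal (F z))
          ≤ S * ∫⁻ r in Ioc (0:ℝ) R, ENNReal.ofReal (512 * (2*Real.pi*τ)⁻¹ *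
              Real.exp (-r^2/(2*τ)) * (r * Real.log ((c*r)⁻¹) ^ 3)⁻¹) := key
        _ ≤ S * (ENNReal.ofReal (2048 / Real.pi * (τ * Real.log τ ^ 2)⁻¹)
              + ENNReal.ofReal (4096 / (Real.pi * R^8))) := by
            apply mul_le_mul_right
            rw [hsplit]
            apply add_le_add
            · exact le_trans hinner (ENNReal.ofReal_le_ofReal hx1)
            · exact le_trans houter (ENNReal.ofReal_le_ofReal hx2)
        _ = S * ENNReal.ofReal (2048 / Real.pi * (τ * Real.log τ ^ 2)⁻¹
              + 4096 / (Real.pi * R^8)) := by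
            rw [ENNReal.ofReal_add (by positivity) (by positivity)]
    have hIτ : 0 ≤ (τ * Real.log τ ^ 2)⁻¹ := by positivity
    calc (∫⁻ z in Metric.closedBall (0 : EuclideanSpace ℝ (Fin 2)) R,
          ENNReal.ofReal (F z)).toReal
        ≤ (S * ENNReal.ofReal (2048 / Real.pi * (τ * Real.log τ ^ 2)⁻¹
            + 4096 / (Real.pi * R^8))).toReal :=
          ENNReal.toReal_mono (ENNReal.mul_ne_top hSne ENNReal.ofReal_ne_top) hcomb
      _ = C0 * (2048 / Real.pi * (τ * Real.log τ ^ 2)⁻¹ + 4096 / (Real.pi * R^8)) := by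
          rw [ENNReal.toReal_mul, ENNReal.toReal_ofReal (by positivity), hC0]
      _ ≤ C0 * (2048 / Real.pi + 4096 / (Real.pi * R^8) + 16 / (Real.pi * d)) *
            ((τ * Real.log τ ^ 2)⁻¹ + 1) := by
          have ha1 : 0 ≤ C0 * (2048 / Real.pi) := by positivity
          have ha2 : 0 ≤ C0 * (4096 / (Real.pi * R^8)) := by positivity
          have ha3 : 0 ≤ C0 * (16 / (Real.pi * d)) := by positivity
          have hb2 := mul_nonneg ha2 hIτ
          have hb3 := mul_nonneg ha3 hIτ
          have hexpand : C0 * (2048 / Real.pi + 4096 / (Real.pi * R^8) + 16 / (Real.pi * d)) *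
              ((τ * Real.log τ ^ 2)⁻¹ + 1)
              = C0 * (2048 / Real.pi * (τ * Real.log τ ^ 2)⁻¹ + 4096 / (Real.pi * R^8))
                + (C0 * (4096 / (Real.pi * R^8)) * (τ * Real.log τ ^ 2)⁻¹
                  + C0 * (16 / (Real.pi * d)) * (τ * Real.log τ ^ 2)⁻¹
                  + C0 * (2048 / Real.pi) + C0 * (16 / (Real.pi * d))) := by ring
          rw [hexpand]
          linarith
  · -- large τ
    rw [if_neg (not_le.mpr hcase)]
    have hwhole := inner_piece (τ := τ) hc hR0 (by rw [hcR]; exact hd1) hτ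
    have hℓR : Real.log ((c*R)⁻¹) = 4 := by rw [hcR, Real.log_inv, hlogd]; ring
    have hx3 : 512 * (2*Real.pi*τ)⁻¹ * (2 * Real.log ((c*R)⁻¹) ^ 2)⁻¹ ≤ 16 / (Real.pi * d) := by
      rw [hℓR]
      have h21 : 512 * (2*Real.pi*τ)⁻¹ * (2 * (4:ℝ) ^ 2)⁻¹ = 8 / (Real.pi * τ) := by
        field_simp
        ring
      rw [h21]
      rw [div_le_div_iff₀ (by positivity) (by positivity)]
      have h22 : Real.pi * d ≤ Real.pi * τ := mul_le_mul_of_nonneg_left hcase.le hπ.le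
      have h23 : 0 < Real.pi * d := by positivity
      nlinarith [h22, h23]
    calc (∫⁻ z in Metric.closedBall (0 : EuclideanSpace ℝ (Fin 2)) R,
          ENNReal.ofReal (F z)).toReal
        ≤ (S * ENNReal.ofReal (16 / (Real.pi * d))).toReal := by
          apply ENNReal.toReal_mono (ENNReal.mul_ne_top hSne ENNReal.ofReal_ne_top)
          calc (∫⁻ z in Metric.closedBall (0 : EuclideanSpace ℝ (Fin 2)) R,
              ENNReal.ofReal (F z)) ≤ _ := key
            _ ≤ S * ENNReal.ofReal (16 / (Real.pi * d)) := by
                apply mul_le_mul_right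
                exact le_trans hwhole (ENNReal.ofReal_le_ofReal hx3)
      _ = C0 * (16 / (Real.pi * d)) := by
          rw [ENNReal.toReal_mul, ENNReal.toReal_ofReal (by positivity), hC0]
      _ ≤ C0 * (2048 / Real.pi + 4096 / (Real.pi * R^8) + 16 / (Real.pi * d)) * (0 + 1) := by
          have ha1 : 0 ≤ C0 * (2048 / Real.pi) := by positivity
          have ha2 : 0 ≤ C0 * (4096 / (Real.pi * R^8)) := by positivity
          have hexpand : C0 * (2048 / Real.pi + 4096 / (Real.pi * R^8) + 16 / (Real.pi * d)) * (0 + 1)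
              = C0 * (16 / (Real.pi * d)) + (C0 * (2048 / Real.pi) + C0 * (4096 / (Real.pi * R^8))) := by
            ring
          rw [hexpand]
          linarith
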